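/- For r > 0 with r ≠ 1, the function f(x,y) = log(1 - 2·r^{1/y}·cos(2πx/y) + r^{2/y}) is an invariant function: ∑_{j=0}^{n-1} log(1 - 2 r^{1/(ny)} cos(2π(x+jy)/(ny)) + r^{2/(ny)}) = log(1 - 2 r^{1/y} cos(2πx/y) + r^{2/y}) for all positive integers n, all x ∈ ℝ, y > 0. -/

import Mathlib

open Real

lemma auxA (s θ : ℝ) :
    Complex.normSq (1 - (s : ℂ) * Complex.exp ((θ : ℂ) * Complex.I))
      = 1 - 2 * s * Real.cos θ + s ^ 2 := by
  rw [Complex.exp_mul_I]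
  simp [Complex.normSq_apply, Complex.cos_ofReal_re, Complex.sin_ofReal_re]
  nlinarith [Real.sin_sq_add_cos_sq θ]

lemma auxC {s : ℝ} (hs : 0 < s) (hs1 : s ≠ 1) (θ : ℝ) :
    0 < 1 - 2 * s * Real.cos θ + s ^ 2 := by
  rw [← auxA]
  rcases eq_or_ne (1 - (s : ℂ) * Complex.exp ((θ : ℂ) * Complex.I)) 0 with h | h
  · exfalso
    have h2 : (s : ℂ) * Complex.exp ((θ : ℂ) * Complex.I) = 1 := by linear_combination -h
    have := congrArg (‖·‖) h2
    simp [Complex.norm_exp, abs_of_pos hs] at this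
    exact hs1 this
  · exact Complex.normSq_pos.mpr h

lemma auxB (n : ℕ) (hn : 0 < n) (z : ℂ) :
    ∏ j ∈ Finset.range n, (1 - Complex.exp (2 * ↑π * Complex.I / n) ^ j * z) = 1 - z ^ n := by
  have h := X_pow_sub_C_eq_prod (Complex.isPrimitiveRoot_exp n hn.ne')
    hn (rfl : z ^ n = z ^ n)
  have h2 := congrArg (Polynomial.eval 1) h
  simpa [Polynomial.eval_prod] using h2.symm

theorem stmt_11 (r : ℝ) (hr : 0 < r) (hr1 : r ≠ 1) :
    ∀ n : ℕ, 0 < n → ∀ x y : ℝ, 0 < y →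
      ∑ j ∈ Finset.range n,
          Real.log (1 - 2 * r ^ (1 / ((n : ℝ) * y)) * Real.cos (2 * π * (x + j * y) / ((n : ℝ) * y))
            + r ^ (2 / ((n : ℝ) * y)))
        = Real.log (1 - 2 * r ^ (1 / y) * Real.cos (2 * π * x / y) + r ^ (2 / y)) := by
  intro n hn x y hy
  have hn' : (0:ℝ) < n := by exact_mod_cast hn
  have hny : (0:ℝ) < (n:ℝ) * y := by positivity
  set ρ := r ^ (1 / ((n:ℝ) * y)) with hρdef
  have hρ : 0 < ρ := Real.rpow_pos_of_pos hr _
  have hexp : (0:ℝ) < 1 / ((n:ℝ) * y) := by positivity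
  have hρ1 : ρ ≠ 1 := by
    rcases hr1.lt_or_gt with h | h
    · exact ne_of_lt (Real.rpow_lt_one hr.le h hexp)
    · exact ne_of_gt (Real.one_lt_rpow_iff_of_pos hr |>.mpr (Or.inl ⟨h, hexp⟩))
  have hs : 0 < r ^ (1 / y) := Real.rpow_pos_of_pos hr _
  have hs1 : r ^ (1 / y) ≠ 1 := by
    have hexp' : (0:ℝ) < 1 / y := by positivity
    rcases hr1.lt_or_gt with h | h
    · exact ne_of_lt (Real.rpow_lt_one hr.le h hexp')
    · exact ne_of_gt (Real.one_lt_rpow_iff_of_pos hr |>.mpr (Or.inl ⟨h, hexp'⟩))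
  have h2ny : r ^ (2 / ((n:ℝ) * y)) = ρ ^ 2 := by
    rw [hρdef, ← Real.rpow_natCast (r ^ (1 / ((n:ℝ)*y))) 2, ← Real.rpow_mul hr.le]
    congr 1
    push_cast
    ring
  have h2y : r ^ (2 / y) = (r ^ (1 / y)) ^ 2 := by
    rw [← Real.rpow_natCast (r ^ (1 / y)) 2, ← Real.rpow_mul hr.le]
    congr 1
    push_cast
    ring
  have hρn : (ρ : ℝ) ^ n = r ^ (1 / y) := by
    rw [hρdef, ← Real.rpow_natCast (r ^ (1 / ((n:ℝ)*y))) n, ← Real.rpow_mul hr.le]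
    congr 1
    field_simp
  have hn0 : (n:ℂ) ≠ 0 := by exact_mod_cast hn'.ne'
  have hy0 : (y:ℂ) ≠ 0 := by exact_mod_cast hy.ne'
  set z : ℂ := (ρ : ℂ) * Complex.exp ((2 * π * x / ((n:ℝ) * y) : ℝ) * Complex.I) with hz
  have hsum : ∀ j ∈ Finset.range n,
      (1 - 2 * ρ * Real.cos (2 * π * (x + j * y) / ((n:ℝ) * y)) + r ^ (2 / ((n:ℝ)*y)))
        = Complex.normSq (1 - Complex.exp (2 * ↑π * Complex.I / n) ^ j * z) := by
    intro j _
    rw [h2ny, ← auxA ρ (2 * π * (x + j * y) / ((n:ℝ) * y))]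
    have hexpeq : Complex.exp ((2 * π * (x + j * y) / ((n:ℝ) * y) : ℝ) * Complex.I)
        = Complex.exp (2 * ↑π * Complex.I / n) ^ j
          * Complex.exp ((2 * π * x / ((n:ℝ) * y) : ℝ) * Complex.I) := by
      rw [← Complex.exp_nat_mul, ← Complex.exp_add]
      congr 1
      push_cast
      field_simp
      ring
    congr 1
    rw [hz, hexpeq]
    ring
  calc ∑ j ∈ Finset.range n,
          Real.log (1 - 2 * ρ * Real.cos (2 * π * (x + j * y) / ((n:ℝ) * y)) + r ^ (2 / ((n:ℝ)*y)))
      = ∑ j ∈ Finset.range n,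
          Real.log (Complex.normSq (1 - Complex.exp (2 * ↑π * Complex.I / n) ^ j * z)) := by
        exact Finset.sum_congr rfl fun j hj => by rw [hsum j hj]
    _ = Real.log (∏ j ∈ Finset.range n,
          Complex.normSq (1 - Complex.exp (2 * ↑π * Complex.I / n) ^ j * z)) := by
        rw [Real.log_prod]
        intro j hj
        rw [← hsum j hj, h2ny]
        exact (auxC hρ hρ1 _).ne'
    _ = Real.log (Complex.normSq (∏ j ∈ Finset.range n,
          (1 - Complex.exp (2 * ↑π * Complex.I / n) ^ j * z))) := by
        rw [map_prod]
    _ = Real.log (Complex.normSq (1 - z ^ n)) := by rw [auxB n hn z]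
    _ = Real.log (1 - 2 * r ^ (1 / y) * Real.cos (2 * π * x / y) + r ^ (2 / y)) := by
        have hzn : z ^ n = (r ^ (1 / y) : ℝ) * Complex.exp ((2 * π * x / y : ℝ) * Complex.I) := by
          rw [hz, mul_pow, ← Complex.exp_nat_mul]
          norm_cast
          rw [hρn]
          congr 2
          push_cast
          field_simp
        rw [hzn, auxA, h2y]
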